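/- Let n be a prime number and Ω = {0, 1, ..., m̄, n−m̄, ..., n−1} for some m̄ ∈ {1, ..., (n−3)/2}, so |Ω| = 2m̄ + 1. If s is a positive integer with s < n / (2(n − |Ω|)), then every s-sparse real vector x̄ ∈ ℝⁿ is the unique solution of min ‖x‖₁ subject to F_Ω x = F_Ω x̄ over real x ∈ ℝⁿ. -/

import Mathlib

/-- The ℓ₁ norm of a vector in ℝⁿ. -/
noncomputable def l1 {n : ℕ} (x : Fin n → ℝ) : ℝ := ∑ i, |x i|

/-- The support of a vector, as a finite index set. -/
noncomputable def suppF {n : ℕ} (x : Fin n → ℝ) : Finset (Fin n) :=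
  Finset.univ.filter (fun i => x i ≠ 0)

/-- `ξ = e^{-2πi/n}`, the primitive `n`-th root of unity used in the DFT. -/
noncomputable def dftXi (n : ℕ) : ℂ :=
  Complex.exp (-2 * (Real.pi : ℂ) * Complex.I / (n : ℂ))

/-- The `n × n` DFT matrix, `[F_n]_{k,l} = (1/√n) ξ^{kl}`. -/
noncomputable def Fdft (n : ℕ) : Matrix (Fin n) (Fin n) ℂ :=
  Matrix.of fun k l => ((Real.sqrt n : ℝ) : ℂ)⁻¹ * dftXi n ^ ((k : ℕ) * (l : ℕ))

/-- The partial DFT matrix `F_Ω`: the rows of `F_n` indexed by `Ω` (in increasing order). -/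
noncomputable def FdftRows (n : ℕ) (Ω : Finset (Fin n)) :
    Matrix (Fin Ω.card) (Fin n) ℂ :=
  Matrix.of fun a l => Fdft n (Ω.orderEmbOfFin rfl a) l

open Complex Finset

lemma dftXi_eq_inv (n : ℕ) : dftXi n = (Complex.exp (2 * (Real.pi : ℂ) * Complex.I / n))⁻¹ := by
  rw [← Complex.exp_neg]
  unfold dftXi
  ring_nf

lemma dftXi_prim (n : ℕ) (hn : n ≠ 0) : IsPrimitiveRoot (dftXi n) n := by
  rw [dftXi_eq_inv]
  exact (Complex.isPrimitiveRoot_exp n hn).inv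

lemma abs_dftXi (n : ℕ) : ‖dftXi n‖ = 1 := by
  have : dftXi n = Complex.exp (((-2 * Real.pi / n : ℝ) : ℂ) * Complex.I) := by
    unfold dftXi; congr 1; push_cast; ring
  rw [this]
  exact Complex.norm_exp_ofReal_mul_I _

lemma conj_dftXi (n : ℕ) : (starRingEnd ℂ) (dftXi n) = (dftXi n)⁻¹ := by
  have h1 : ‖dftXi n‖ = 1 := abs_dftXi n
  have h0 : dftXi n ≠ 0 := by
    intro h; rw [h] at h1; simp at h1
  field_simp
  rw [mul_comm, Complex.mul_conj, Complex.normSq_eq_norm_sq, h1]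
  norm_num

lemma sqrt_ne_zero' {n : ℕ} (hn : n ≠ 0) : ((Real.sqrt n : ℝ) : ℂ) ≠ 0 := by
  have : (0 : ℝ) < Real.sqrt n := Real.sqrt_pos.2 (by exact_mod_cast Nat.pos_of_ne_zero hn)
  exact_mod_cast this.ne'

/-- Orthogonality of DFT columns: `∑ₖ conj(F k i) * F k j = δ_{ij}`. -/
lemma Fdft_orth {n : ℕ} (hn : n ≠ 0) (i j : Fin n) :
    ∑ k : Fin n, (starRingEnd ℂ) (Fdft n k i) * Fdft n k j = if i = j then 1 else 0 := by
  have hprim := dftXi_prim n hn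
  have hζ0 : dftXi n ≠ 0 := by
    intro h
    have := abs_dftXi n
    rw [h] at this; simp at this
  have hsq : ((Real.sqrt n : ℝ) : ℂ) * ((Real.sqrt n : ℝ) : ℂ) = (n : ℂ) := by
    rw [← Complex.ofReal_mul, Real.mul_self_sqrt (by positivity)]
    norm_cast
  have hterm : ∀ k : Fin n, (starRingEnd ℂ) (Fdft n k i) * Fdft n k j
      = ((n : ℂ))⁻¹ * ((dftXi n ^ (j : ℕ)) * (dftXi n ^ (i : ℕ))⁻¹) ^ (k : ℕ) := by
    intro k
    simp only [Fdft, Matrix.of_apply, map_mul, map_inv₀, map_pow, Complex.conj_ofReal,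
      conj_dftXi]
    have e1 : (dftXi n)⁻¹ ^ ((k:ℕ) * (i:ℕ)) = ((dftXi n ^ (i:ℕ))⁻¹) ^ (k:ℕ) := by
      rw [inv_pow, inv_pow, ← pow_mul, Nat.mul_comm]
    have e2 : dftXi n ^ ((k:ℕ) * (j:ℕ)) = (dftXi n ^ (j:ℕ)) ^ (k:ℕ) := by
      rw [← pow_mul, Nat.mul_comm]
    rw [e1, e2, mul_pow, ← hsq, mul_inv]
    ring
  rw [Finset.sum_congr rfl (fun k _ => hterm k), ← Finset.mul_sum]
  set w : ℂ := (dftXi n ^ (j : ℕ)) * (dftXi n ^ (i : ℕ))⁻¹ with hw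
  have hwn : w ^ n = 1 := by
    have hz1 : (dftXi n ^ (j:ℕ)) ^ n = 1 := by
      rw [← pow_mul, Nat.mul_comm, pow_mul, hprim.pow_eq_one, one_pow]
    have hz2 : ((dftXi n ^ (i:ℕ))⁻¹) ^ n = 1 := by
      rw [inv_pow, ← pow_mul, Nat.mul_comm, pow_mul, hprim.pow_eq_one, one_pow, inv_one]
    rw [hw, mul_pow, hz1, hz2, mul_one]
  have hsum : ∑ k : Fin n, w ^ (k : ℕ) = if i = j then (n : ℂ) else 0 := by
    by_cases hij : i = j
    · subst hij
      simp only [hw, mul_inv_cancel₀ (pow_ne_zero _ hζ0), if_true]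
      simp
    · rw [if_neg hij]
      have hwne : w ≠ 1 := by
        intro hcontr
        apply hij
        have : dftXi n ^ (j : ℕ) = dftXi n ^ (i : ℕ) := by
          have := mul_inv_eq_one₀ (pow_ne_zero (i:ℕ) hζ0) |>.mp (by rw [← hw]; exact hcontr)
          exact this
        exact (Fin.ext (hprim.pow_inj j.isLt i.isLt this)).symm
      rw [Fin.sum_univ_eq_sum_range (fun k => w ^ k) n, geom_sum_eq hwne, hwn]
      simp
  rw [hsum]
  by_cases hij : i = j
  · rw [if_pos hij, if_pos hij, inv_mul_cancel₀ (by exact_mod_cast hn)]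
  · rw [if_neg hij, if_neg hij, mul_zero]

/-- Fourier inversion: recover a vector from its DFT. -/
lemma Fdft_inversion {n : ℕ} (hn : n ≠ 0) (h : Fin n → ℂ) (i : Fin n) :
    ∑ k : Fin n, (starRingEnd ℂ) (Fdft n k i) * ((Fdft n).mulVec h) k = h i := by
  have : ∀ k : Fin n, (starRingEnd ℂ) (Fdft n k i) * ((Fdft n).mulVec h) k
      = ∑ j : Fin n, (starRingEnd ℂ) (Fdft n k i) * Fdft n k j * h j := by
    intro k
    simp only [Matrix.mulVec, dotProduct, Finset.mul_sum]
    exact Finset.sum_congr rfl (fun j _ => by ring)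
  rw [Finset.sum_congr rfl (fun k _ => this k), Finset.sum_comm]
  have : ∀ j : Fin n, ∑ k : Fin n, (starRingEnd ℂ) (Fdft n k i) * Fdft n k j * h j
      = (if i = j then 1 else 0) * h j := by
    intro j
    rw [← Finset.sum_mul, Fdft_orth hn i j]
  rw [Finset.sum_congr rfl (fun j _ => this j)]
  simp

lemma abs_Fdft {n : ℕ} (hn : n ≠ 0) (k l : Fin n) :
    ‖Fdft n k l‖ = (Real.sqrt n)⁻¹ := by
  simp only [Fdft, Matrix.of_apply, norm_mul, norm_inv, norm_pow, Complex.norm_real, Real.norm_eq_abs,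
    abs_dftXi, one_pow, mul_one]
  rw [_root_.abs_of_nonneg (Real.sqrt_nonneg _)]

/-- Let `n` be prime and `Ω = {0,…,m̄} ∪ {n-m̄,…,n-1}` with `1 ≤ m̄ ≤ (n-3)/2`,
so `|Ω| = 2m̄+1`.  If `s ≥ 1` and `s < n / (2(n - |Ω|))`, then every `s`-sparse real
vector `xbar ∈ ℝⁿ` is the unique solution of `min ‖x‖₁ s.t. F_Ω x = F_Ω xbar` over real
`x ∈ ℝⁿ`. -/
theorem stmt19 (n : ℕ) (hn : n.Prime) (mbar : ℕ) (hm1 : 1 ≤ mbar)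
    (hm2 : mbar ≤ (n - 3) / 2)
    (Ω : Finset (Fin n))
    (hΩ : Ω = Finset.univ.filter (fun k : Fin n => (k : ℕ) ≤ mbar ∨ n - mbar ≤ (k : ℕ)))
    (s : ℕ) (hs : 1 ≤ s)
    (hbound : (s : ℝ) < (n : ℝ) / (2 * ((n - Ω.card : ℕ) : ℝ)))
    (xbar : Fin n → ℝ) (hsparse : (suppF xbar).card ≤ s) :
    ∀ x : Fin n → ℝ,
      (FdftRows n Ω).mulVec (fun i => (x i : ℂ)) =
        (FdftRows n Ω).mulVec (fun i => (xbar i : ℂ)) →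
      x ≠ xbar → l1 xbar < l1 x := by
  intro x hx hne
  have hn0 : n ≠ 0 := hn.pos.ne'
  have hnR : (0 : ℝ) < n := by exact_mod_cast hn.pos
  set h : Fin n → ℝ := fun i => x i - xbar i with hh
  set hc : Fin n → ℂ := fun i => ((h i : ℝ) : ℂ) with hhc
  set g : Fin n → ℂ := (Fdft n).mulVec hc with hg
  set T : ℝ := ∑ i, |h i| with hT
  set r : ℝ := ((n - Ω.card : ℕ) : ℝ) with hr
  have hr0 : 0 ≤ r := by positivity
  -- g vanishes on Ω
  have hgΩ : ∀ k ∈ Ω, g k = 0 := by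
    intro k hk
    obtain ⟨a, ha⟩ : ∃ a : Fin Ω.card, Ω.orderEmbOfFin rfl a = k := by
      have := Finset.range_orderEmbOfFin Ω (rfl : Ω.card = Ω.card)
      have hk' : k ∈ Set.range (Ω.orderEmbOfFin rfl) := by rw [this]; exact_mod_cast hk
      exact hk'
    have hrow : ∀ l, FdftRows n Ω a l = Fdft n k l := by
      intro l; simp only [FdftRows, Matrix.of_apply, ha]
    have hxa := congrFun hx a
    simp only [Matrix.mulVec, dotProduct] at hxa ⊢
    have expand : g k = ∑ j, FdftRows n Ω a j * hc j := by
      simp only [hg, Matrix.mulVec, dotProduct]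
      exact Finset.sum_congr rfl (fun j _ => by rw [hrow j])
    rw [expand]
    have : ∑ j, FdftRows n Ω a j * hc j
        = ∑ j, FdftRows n Ω a j * ((x j : ℝ) : ℂ) - ∑ j, FdftRows n Ω a j * ((xbar j : ℝ) : ℂ) := by
      rw [← Finset.sum_sub_distrib]
      refine Finset.sum_congr rfl (fun j _ => ?_)
      simp only [hhc, hh]
      push_cast
      ring
    rw [this, hxa, sub_self]
  -- bound on |g k|
  have hgbound : ∀ k : Fin n, ‖g k‖ ≤ (Real.sqrt n)⁻¹ * T := by
    intro k
    have : g k = ∑ j, Fdft n k j * hc j := by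
      simp [hg, Matrix.mulVec, dotProduct]
    rw [this]
    calc ‖∑ j, Fdft n k j * hc j‖
        ≤ ∑ j, ‖Fdft n k j * hc j‖ := norm_sum_le _ _
      _ = ∑ j, (Real.sqrt n)⁻¹ * |h j| := by
          refine Finset.sum_congr rfl (fun j _ => ?_)
          rw [norm_mul, abs_Fdft hn0, hhc]
          simp [Complex.norm_real]
      _ = (Real.sqrt n)⁻¹ * T := by rw [← Finset.mul_sum]
  -- pointwise bound on |h i|
  have hkey : ∀ i : Fin n, |h i| ≤ r / n * T := by
    intro i
    have hinv := Fdft_inversion hn0 hc i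
    have hzero : ∑ k ∈ Ω, (starRingEnd ℂ) (Fdft n k i) * g k = 0 :=
      Finset.sum_eq_zero (fun k hk => by rw [hgΩ k hk, mul_zero])
    have hsplit : ∑ k : Fin n, (starRingEnd ℂ) (Fdft n k i) * g k
        = ∑ k ∈ Ωᶜ, (starRingEnd ℂ) (Fdft n k i) * g k := by
      rw [← Finset.sum_compl_add_sum Ω (fun k => (starRingEnd ℂ) (Fdft n k i) * g k),
        hzero, add_zero]
    have habs : |h i| = ‖hc i‖ := by simp [hhc]
    rw [habs, ← hinv, ← hg, hsplit]
    calc ‖∑ k ∈ Ωᶜ, (starRingEnd ℂ) (Fdft n k i) * g k‖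
        ≤ ∑ k ∈ Ωᶜ, ‖(starRingEnd ℂ) (Fdft n k i) * g k‖ :=
          norm_sum_le _ _
      _ ≤ ∑ _k ∈ Ωᶜ, (Real.sqrt n)⁻¹ * ((Real.sqrt n)⁻¹ * T) := by
          refine Finset.sum_le_sum (fun k _ => ?_)
          rw [norm_mul, Complex.norm_conj, abs_Fdft hn0]
          exact mul_le_mul_of_nonneg_left (hgbound k) (by positivity)
      _ = (Ωᶜ.card : ℝ) * ((Real.sqrt n)⁻¹ * ((Real.sqrt n)⁻¹ * T)) := by
          rw [Finset.sum_const, nsmul_eq_mul]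
      _ = r / n * T := by
          rw [Finset.card_compl, Fintype.card_fin, ← hr]
          have : (Real.sqrt n)⁻¹ * ((Real.sqrt n)⁻¹ * T) = (Real.sqrt n * Real.sqrt n)⁻¹ * T := by
            rw [mul_inv]; ring
          rw [this, Real.mul_self_sqrt hnR.le]
          ring
  -- T > 0
  have hTpos : 0 < T := by
    obtain ⟨i, hi⟩ : ∃ i, h i ≠ 0 := by
      by_contra hcon
      push_neg at hcon
      apply hne
      funext i
      have := hcon i
      simp only [hh, sub_eq_zero] at this
      exact this
    have h1 : |h i| ≤ T := Finset.single_le_sum (f := fun j => |h j|) (fun j _ => abs_nonneg _)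
      (Finset.mem_univ i)
    have h2 : 0 < |h i| := abs_pos.2 hi
    linarith
  -- sum over support bound
  set S : Finset (Fin n) := suppF xbar with hS
  have hSsum : ∑ i ∈ S, |h i| ≤ (s : ℝ) * (r / n * T) := by
    calc ∑ i ∈ S, |h i| ≤ ∑ _i ∈ S, r / n * T := Finset.sum_le_sum (fun i _ => hkey i)
      _ = (S.card : ℝ) * (r / n * T) := by rw [Finset.sum_const, nsmul_eq_mul]
      _ ≤ (s : ℝ) * (r / n * T) := by
          apply mul_le_mul_of_nonneg_right _ (by positivity)
          exact_mod_cast hsparse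
  -- 2 s r < n
  have hsrn : 2 * (s : ℝ) * r < n := by
    rcases eq_or_lt_of_le hr0 with hrz | hrp
    · rw [← hrz]; simpa using hnR
    · have h2r : (0:ℝ) < 2 * r := by linarith
      have := (lt_div_iff₀ h2r).mp hbound
      nlinarith
  -- final l1 comparison
  have hmain : l1 x - l1 xbar ≥ T - 2 * ∑ i ∈ S, |h i| := by
    have hdecomp : l1 x - l1 xbar = ∑ i, (|x i| - |xbar i|) := by
      simp [l1, Finset.sum_sub_distrib]
    rw [hdecomp]
    have hTsplit : T = ∑ i ∈ S, |h i| + ∑ i ∈ Sᶜ, |h i| := by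
      rw [hT, ← Finset.sum_add_sum_compl S (fun i => |h i|)]
    have step : ∀ i, (if i ∈ S then -|h i| else |h i|) ≤ |x i| - |xbar i| := by
      intro i
      by_cases hi : i ∈ S
      · rw [if_pos hi]
        have : |xbar i| - |x i| ≤ |xbar i - x i| := abs_sub_abs_le_abs_sub _ _
        have heq : |xbar i - x i| = |h i| := by rw [hh]; simp [abs_sub_comm]
        linarith [heq ▸ this]
      · rw [if_neg hi]
        have hz : xbar i = 0 := by
          by_contra hnz
          exact hi (by simp [hS, suppF, hnz])
        rw [hz]
        simp only [abs_zero, sub_zero]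
        have : h i = x i := by rw [hh]; simp [hz]
        rw [this]
    calc ∑ i, (|x i| - |xbar i|) ≥ ∑ i, (if i ∈ S then -|h i| else |h i|) :=
          Finset.sum_le_sum (fun i _ => step i)
      _ = ∑ i ∈ S, (-|h i|) + ∑ i ∈ Sᶜ, |h i| := by
          rw [← Finset.sum_add_sum_compl S]
          congr 1
          · exact Finset.sum_congr rfl (fun i hi => by rw [if_pos hi])
          · exact Finset.sum_congr rfl (fun i hi => by
              rw [if_neg (Finset.mem_compl.mp hi)])
      _ = T - 2 * ∑ i ∈ S, |h i| := by
          rw [hTsplit, Finset.sum_neg_distrib]; ring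
  have hfinal : T - 2 * ∑ i ∈ S, |h i| > 0 := by
    have h1 : 2 * ∑ i ∈ S, |h i| ≤ 2 * ((s : ℝ) * (r / n * T)) := by linarith
    have h2 : 2 * ((s : ℝ) * (r / n * T)) < T := by
      have : 2 * ((s : ℝ) * (r / n * T)) = (2 * s * r / n) * T := by ring
      rw [this]
      have hlt : 2 * (s : ℝ) * r / n < 1 := (div_lt_one hnR).2 hsrn
      nlinarith
    linarith
  linarith
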